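/- arXiv:0907.5464 — 2 statements merged into one kernel-verified Lean document; each statement's English description precedes it below -/
import Mathlib

section
/- Let N and K be positive integers, let w_1, …, w_K and h̃ be vectors in ℂ^N, let γ ≥ 0, σ² ≥ 0, δ ≥ 0, fix k ∈ {1, …, K}, set ε = δ² + 2δ‖h̃‖ and M = w_k w_k† − γ·Σ_{i≠k} w_i w_i†. If Re Tr((h̃h̃†)M) − ε‖M‖_F ≥ σ²γ, then for every h ∈ ℂ^N with ‖h − h̃‖ ≤ δ one has |w_k†h|² ≥ γ·(σ² + Σ_{i≠k} |w_i†h|²); that is, the exact worst-case (ExCS) constraint guarantees the SINR constraint for every channel realization in the uncertainty ball. -/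
open Matrix BigOperators Finset

/-- The Frobenius norm of a complex `N × N` matrix. -/
noncomputable def frob {N : ℕ} (A : Matrix (Fin N) (Fin N) ℂ) : ℝ :=
  Real.sqrt (∑ i, ∑ j, ‖A i j‖ ^ 2)

/-- The real part of the trace of a complex matrix. -/
noncomputable def reTr {N : ℕ} (A : Matrix (Fin N) (Fin N) ℂ) : ℝ :=
  (Matrix.trace A).re

/-- The Euclidean norm of a complex vector. -/
noncomputable def vnorm {N : ℕ} (v : Fin N → ℂ) : ℝ :=
  Real.sqrt (∑ i, ‖v i‖ ^ 2)

/-- The standard inner product `u† v` of two complex vectors. -/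
noncomputable def dotc {N : ℕ} (u v : Fin N → ℂ) : ℂ :=
  ∑ i, star (u i) * v i

/-- The outer product `u v†` of two complex vectors. -/
def outer {N : ℕ} (u v : Fin N → ℂ) : Matrix (Fin N) (Fin N) ℂ :=
  fun i j => u i * star (v j)

lemma vnorm_nonneg {N : ℕ} (v : Fin N → ℂ) : 0 ≤ vnorm v := Real.sqrt_nonneg _

lemma frob_nonneg {N : ℕ} (A : Matrix (Fin N) (Fin N) ℂ) : 0 ≤ frob A := Real.sqrt_nonneg _

lemma vnorm_eq {N : ℕ} (v : Fin N → ℂ) :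
    vnorm v = ‖(WithLp.equiv 2 (Fin N → ℂ)).symm v‖ := by
  rw [EuclideanSpace.norm_eq, vnorm]
  simp

lemma dotc_eq {N : ℕ} (u v : Fin N → ℂ) :
    dotc u v = inner ℂ ((WithLp.equiv 2 (Fin N → ℂ)).symm u) ((WithLp.equiv 2 (Fin N → ℂ)).symm v) := by
  rw [PiLp.inner_apply, dotc]
  simp [RCLike.inner_apply, mul_comm]

lemma abs_dotc_le {N : ℕ} (u v : Fin N → ℂ) :
    ‖dotc u v‖ ≤ vnorm u * vnorm v := by
  rw [dotc_eq, vnorm_eq, vnorm_eq]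
  exact norm_inner_le_norm _ _

lemma vnorm_mulVec_le {N : ℕ} (A : Matrix (Fin N) (Fin N) ℂ) (v : Fin N → ℂ) :
    vnorm (A.mulVec v) ≤ frob A * vnorm v := by
  have hrow : ∀ j, ‖A.mulVec v j‖ ^ 2 ≤
      (∑ i, ‖A j i‖ ^ 2) * vnorm v ^ 2 := by
    intro j
    have h1 : A.mulVec v j = dotc (fun i => star (A j i)) v := by
      simp [Matrix.mulVec, dotProduct, dotc]
    have h2 := abs_dotc_le (fun i => star (A j i)) v
    rw [← h1] at h2
    have h3 : ‖A.mulVec v j‖ ^ 2 ≤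
        (vnorm (fun i => star (A j i)) * vnorm v) ^ 2 := by
      apply pow_le_pow_left₀ (norm_nonneg _) h2
    calc ‖A.mulVec v j‖ ^ 2 ≤ (vnorm (fun i => star (A j i)) * vnorm v) ^ 2 := h3
      _ = (vnorm (fun i => star (A j i))) ^ 2 * vnorm v ^ 2 := by ring
      _ = (∑ i, ‖A j i‖ ^ 2) * vnorm v ^ 2 := by
          congr 1
          rw [vnorm, Real.sq_sqrt]
          · simp
          · positivity
  rw [vnorm, frob]
  calc Real.sqrt (∑ j, ‖A.mulVec v j‖ ^ 2)
      ≤ Real.sqrt (∑ j, (∑ i, ‖A j i‖ ^ 2) * vnorm v ^ 2) := by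
        apply Real.sqrt_le_sqrt
        exact Finset.sum_le_sum fun j _ => hrow j
    _ = Real.sqrt ((∑ j, ∑ i, ‖A j i‖ ^ 2) * vnorm v ^ 2) := by
        rw [Finset.sum_mul]
    _ = Real.sqrt (∑ j, ∑ i, ‖A j i‖ ^ 2) * vnorm v := by
        rw [Real.sqrt_mul (by positivity), Real.sqrt_sq (vnorm_nonneg v)]

lemma abs_dotc_mulVec_le {N : ℕ} (u : Fin N → ℂ) (A : Matrix (Fin N) (Fin N) ℂ) (v : Fin N → ℂ) :
    ‖dotc u (A.mulVec v)‖ ≤ vnorm u * (frob A * vnorm v) :=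
  le_trans (abs_dotc_le _ _)
    (mul_le_mul_of_nonneg_left (vnorm_mulVec_le A v) (vnorm_nonneg u))

lemma trace_outer_mul {N : ℕ} (a b : Fin N → ℂ) (M : Matrix (Fin N) (Fin N) ℂ) :
    Matrix.trace (outer a b * M) = dotc b (M.mulVec a) := by
  rw [Matrix.trace, dotc]
  simp only [Matrix.diag_apply, Matrix.mul_apply, outer, Matrix.mulVec, dotProduct,
    Finset.mul_sum]
  rw [Finset.sum_comm]
  apply Finset.sum_congr rfl
  intro j _
  apply Finset.sum_congr rfl
  intro i _
  ring

lemma dotc_outer_self {N : ℕ} (u h : Fin N → ℂ) :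
    dotc h ((outer u u).mulVec h) = (starRingEnd ℂ) (dotc u h) * dotc u h := by
  simp only [dotc, outer, Matrix.mulVec, dotProduct, Finset.mul_sum, map_sum, _root_.map_mul,
    Finset.sum_mul, starRingEnd_apply]
  rw [Finset.sum_comm]
  apply Finset.sum_congr rfl
  intro j _
  apply Finset.sum_congr rfl
  intro i _
  simp [mul_comm, mul_left_comm, mul_assoc]

lemma re_dotc_outer_self {N : ℕ} (u h : Fin N → ℂ) :
    (dotc h ((outer u u).mulVec h)).re = ‖dotc u h‖ ^ 2 := by
  rw [dotc_outer_self]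
  rw [Complex.conj_mul', ← Complex.ofReal_pow, Complex.ofReal_re]

lemma sum_mulVec' {N K : ℕ} (s : Finset (Fin K)) (A : Fin K → Matrix (Fin N) (Fin N) ℂ)
    (v : Fin N → ℂ) : (∑ i ∈ s, A i).mulVec v = ∑ i ∈ s, (A i).mulVec v := by
  ext j
  simp only [Matrix.mulVec, dotProduct, Finset.sum_apply, Matrix.sum_apply, Finset.sum_mul]
  rw [Finset.sum_comm]

lemma dotc_add_left {N : ℕ} (a b c : Fin N → ℂ) : dotc (a + b) c = dotc a c + dotc b c := by
  simp [dotc, add_mul, Finset.sum_add_distrib]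

lemma dotc_add_right {N : ℕ} (a b c : Fin N → ℂ) : dotc a (b + c) = dotc a b + dotc a c := by
  simp [dotc, mul_add, Finset.sum_add_distrib]

lemma dotc_sub_right {N : ℕ} (a b c : Fin N → ℂ) : dotc a (b - c) = dotc a b - dotc a c := by
  simp [dotc, mul_sub, Finset.sum_sub_distrib]

lemma dotc_sum_right {N K : ℕ} (s : Finset (Fin K)) (a : Fin N → ℂ) (f : Fin K → Fin N → ℂ) :
    dotc a (∑ i ∈ s, f i) = ∑ i ∈ s, dotc a (f i) := by
  simp only [dotc, Finset.sum_apply, Finset.mul_sum]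
  rw [Finset.sum_comm]

lemma dotc_smul_right {N : ℕ} (γ : ℝ) (a b : Fin N → ℂ) :
    dotc a (γ • b) = (γ : ℂ) * dotc a b := by
  simp [dotc, Finset.mul_sum, Complex.real_smul]
  apply Finset.sum_congr rfl
  intro i _
  ring

-- main quadratic form identity
lemma qform_eq {N K : ℕ} (w : Fin K → Fin N → ℂ) (k : Fin K) (γ : ℝ)
    (M : Matrix (Fin N) (Fin N) ℂ)
    (hM : M = outer (w k) (w k) - γ • ∑ i ∈ Finset.univ.erase k, outer (w i) (w i))
    (h : Fin N → ℂ) :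
    (dotc h (M.mulVec h)).re =
      ‖dotc (w k) h‖ ^ 2 -
        γ * ∑ i ∈ Finset.univ.erase k, ‖dotc (w i) h‖ ^ 2 := by
  subst hM
  rw [Matrix.sub_mulVec, Matrix.smul_mulVec, sum_mulVec', dotc_sub_right,
    dotc_smul_right, dotc_sum_right]
  rw [Complex.sub_re, re_dotc_outer_self, Complex.re_ofReal_mul, Complex.re_sum]
  congr 1
  rw [mul_eq_mul_left_iff]
  left
  exact Finset.sum_congr rfl fun i _ => re_dotc_outer_self (w i) h

theorem stmt10 (N K : ℕ) (hN : 0 < N) (hK : 0 < K)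
    (w : Fin K → Fin N → ℂ) (h' : Fin N → ℂ)
    (γ : ℝ) (hγ : 0 ≤ γ) (σsq : ℝ) (hσ : 0 ≤ σsq) (δ : ℝ) (hδ : 0 ≤ δ)
    (k : Fin K)
    (ε : ℝ) (hε : ε = δ ^ 2 + 2 * δ * vnorm h')
    (M : Matrix (Fin N) (Fin N) ℂ)
    (hM : M = outer (w k) (w k) - γ • ∑ i ∈ Finset.univ.erase k, outer (w i) (w i))
    (hExCS : reTr (outer h' h' * M) - ε * frob M ≥ σsq * γ) :
    ∀ h : Fin N → ℂ, vnorm (h - h') ≤ δ →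
      ‖dotc (w k) h‖ ^ 2 ≥
        γ * (σsq + ∑ i ∈ Finset.univ.erase k, ‖dotc (w i) h‖ ^ 2) := by
  intro h hball
  set e : Fin N → ℂ := h - h' with he
  have hhe : h = h' + e := by rw [he]; ring
  have hQh := qform_eq w k γ M hM h
  have hQh' := qform_eq w k γ M hM h'
  have htr : reTr (outer h' h' * M) = (dotc h' (M.mulVec h')).re := by
    rw [reTr, trace_outer_mul]
  have hdec : dotc h (M.mulVec h) = dotc h' (M.mulVec h') +
      (dotc h' (M.mulVec e) + (dotc e (M.mulVec h') + dotc e (M.mulVec e))) := by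
    conv_lhs => rw [hhe]
    simp only [Matrix.mulVec_add, dotc_add_right, dotc_add_left]
    ring
  set t1 := dotc h' (M.mulVec e)
  set t2 := dotc e (M.mulVec h')
  set t3 := dotc e (M.mulVec e)
  have hF := frob_nonneg M
  have hvh' := vnorm_nonneg h'
  have hve := vnorm_nonneg e
  have b1 : ‖t1‖ ≤ vnorm h' * (frob M * δ) := by
    refine le_trans (abs_dotc_mulVec_le h' M e) ?_
    exact mul_le_mul_of_nonneg_left (mul_le_mul_of_nonneg_left hball hF) hvh'
  have b2 : ‖t2‖ ≤ δ * (frob M * vnorm h') := by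
    refine le_trans (abs_dotc_mulVec_le e M h') ?_
    exact mul_le_mul_of_nonneg_right hball (by positivity)
  have b3 : ‖t3‖ ≤ δ * (frob M * δ) := by
    refine le_trans (abs_dotc_mulVec_le e M e) ?_
    exact mul_le_mul hball (mul_le_mul_of_nonneg_left hball hF) (by positivity) hδ
  have r1 : -‖t1‖ ≤ t1.re := by
    have := Complex.abs_re_le_norm t1
    have := neg_abs_le t1.re
    linarith
  have r2 : -‖t2‖ ≤ t2.re := by
    have := Complex.abs_re_le_norm t2
    have := neg_abs_le t2.re
    linarith
  have r3 : -‖t3‖ ≤ t3.re := by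
    have := Complex.abs_re_le_norm t3
    have := neg_abs_le t3.re
    linarith
  have hre : (dotc h (M.mulVec h)).re = (dotc h' (M.mulVec h')).re + (t1.re + (t2.re + t3.re)) := by
    rw [hdec]; simp [Complex.add_re]
  rw [htr] at hExCS
  have key : (dotc h (M.mulVec h)).re ≥ σsq * γ := by
    have : ‖t1‖ + ‖t2‖ + ‖t3‖ ≤ ε * frob M := by
      rw [hε]; nlinarith
    linarith
  rw [hQh] at key
  linarith
end

section
/- Let N and K be positive integers, let H̃ be a Hermitian N×N complex matrix, let W_1, …, W_K be positive semidefinite Hermitian N×N complex matrices, let γ ≥ 0, ε ≥ 0, σ²γ ∈ ℝ, fix k ∈ {1, …, K}, and set M = W_k − γ·Σ_{i≠k} W_i. If the LBCS constraint Re Tr(H̃M) − ε·( Tr(W_k) + γ·Σ_{i≠k} Tr(W_i) ) ≥ σ²γ holds (where each Tr(W_j) is real since W_j is Hermitian), then the ExCS constraint Re Tr(H̃M) − ε‖M‖_F ≥ σ²γ also holds; that is, every point feasible for the loosely bounded problem is feasible for the exact problem. -/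
open Matrix BigOperators Finset
open scoped ComplexOrder

attribute [local instance] Matrix.frobeniusNormedAddCommGroup Matrix.frobeniusNormedSpace

lemma frob_eq_norm {N : ℕ} (A : Matrix (Fin N) (Fin N) ℂ) : frob A = ‖A‖ := by
  rw [Matrix.frobenius_norm_def, frob, Real.sqrt_eq_rpow]
  norm_num

lemma frob_le_trace {N : ℕ} (A : Matrix (Fin N) (Fin N) ℂ) (hA : A.PosSemidef) :
    frob A ≤ (Matrix.trace A).re := by
  obtain ⟨B, hB⟩ : ∃ B : Matrix (Fin N) (Fin N) ℂ, A = Bᴴ * B := by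
    open scoped MatrixOrder in
    exact ⟨CFC.sqrt A, by
      rw [(CFC.sqrt_nonneg A).posSemidef.isHermitian.eq, CFC.sqrt_mul_sqrt_self A hA.nonneg]⟩
  have hdiag : ∀ i, (A i i).re = ∑ l, ‖B l i‖ ^ 2 := by
    intro i
    rw [hB]
    simp only [Matrix.mul_apply, Matrix.conjTranspose_apply, Complex.re_sum]
    refine Finset.sum_congr rfl fun l _ => ?_
    simp [Complex.star_def, Complex.mul_re, Complex.sq_norm, Complex.normSq_apply]
  have hentry : ∀ i j, ‖A i j‖ ^ 2 ≤ (A i i).re * (A j j).re := by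
    intro i j
    have h1 : ‖A i j‖ ≤ ∑ l, ‖B l i‖ * ‖B l j‖ := by
      rw [hB]
      simp only [Matrix.mul_apply, Matrix.conjTranspose_apply]
      refine (norm_sum_le _ _).trans ?_
      apply Finset.sum_le_sum
      intro l _
      simp [Complex.norm_conj]
    have h2 : (∑ l, ‖B l i‖ * ‖B l j‖) ^ 2 ≤
        (∑ l, ‖B l i‖ ^ 2) * (∑ l, ‖B l j‖ ^ 2) :=
      Finset.sum_mul_sq_le_sq_mul_sq _ _ _
    calc ‖A i j‖ ^ 2 ≤ (∑ l, ‖B l i‖ * ‖B l j‖) ^ 2 := by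
          apply pow_le_pow_left₀ (norm_nonneg _) h1
      _ ≤ _ := h2
      _ = (A i i).re * (A j j).re := by rw [hdiag i, hdiag j]
  have htr : (Matrix.trace A).re = ∑ i, (A i i).re := by
    simp [Matrix.trace, Complex.re_sum]
  have htrnn : 0 ≤ (Matrix.trace A).re := by
    rw [htr]
    apply Finset.sum_nonneg
    intro i _
    rw [hdiag i]; positivity
  rw [frob]
  rw [show (Matrix.trace A).re = Real.sqrt (((Matrix.trace A).re)^2) by rw [Real.sqrt_sq htrnn]]
  apply Real.sqrt_le_sqrt
  rw [htr, sq, Finset.sum_mul_sum]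
  exact Finset.sum_le_sum fun i _ => Finset.sum_le_sum fun j _ => hentry i j

theorem stmt14 (N K : ℕ) (hN : 0 < N) (hK : 0 < K)
    (H : Matrix (Fin N) (Fin N) ℂ) (hH : H.IsHermitian)
    (W : Fin K → Matrix (Fin N) (Fin N) ℂ) (hW : ∀ i, (W i).PosSemidef)
    (γ : ℝ) (hγ : 0 ≤ γ) (ε : ℝ) (hε : 0 ≤ ε) (t : ℝ)
    (k : Fin K)
    (M : Matrix (Fin N) (Fin N) ℂ)
    (hM : M = W k - γ • ∑ i ∈ Finset.univ.erase k, W i)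
    (hLBCS : reTr (H * M)
        - ε * ((Matrix.trace (W k)).re +
            γ * ∑ i ∈ Finset.univ.erase k, (Matrix.trace (W i)).re)
        ≥ t) :
    reTr (H * M) - ε * frob M ≥ t := by
  set S := ∑ i ∈ Finset.univ.erase k, W i with hS
  have hSpsd : S.PosSemidef := by
    rw [hS]
    refine Finset.sum_induction _ _ (fun a b ha hb => ha.add hb) ?_ (fun i _ => hW i)
    exact Matrix.PosSemidef.zero
  have h1 : frob M ≤ frob (W k) + γ * frob S := by
    rw [hM, frob_eq_norm, frob_eq_norm, frob_eq_norm]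
    calc ‖W k - γ • S‖ ≤ ‖W k‖ + ‖γ • S‖ := norm_sub_le _ _
      _ = ‖W k‖ + γ * ‖S‖ := by rw [norm_smul, Real.norm_eq_abs, abs_of_nonneg hγ]
  have h2 : frob (W k) ≤ (Matrix.trace (W k)).re := frob_le_trace _ (hW k)
  have h3 : frob S ≤ (Matrix.trace S).re := frob_le_trace _ hSpsd
  have h4 : (Matrix.trace S).re = ∑ i ∈ Finset.univ.erase k, (Matrix.trace (W i)).re := by
    rw [hS, Matrix.trace_sum, Complex.re_sum]
  have h5 : frob M ≤ (Matrix.trace (W k)).re +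
      γ * ∑ i ∈ Finset.univ.erase k, (Matrix.trace (W i)).re := by
    rw [← h4]
    have := mul_le_mul_of_nonneg_left h3 hγ
    linarith
  have h6 : ε * frob M ≤ ε * ((Matrix.trace (W k)).re +
      γ * ∑ i ∈ Finset.univ.erase k, (Matrix.trace (W i)).re) :=
    mul_le_mul_of_nonneg_left h5 hε
  linarith
end
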